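/- arXiv:1506.02828 — 5 statements merged into one kernel-verified Lean document; each statement's English description precedes it below -/
import Mathlib

section
/- Let (Ω, A, P) be a probability space, (Ω₁, A₁) and (Ω₂, A₂) measurable spaces, and V₁ : Ω → Ω₁ and V₂, V₂', V₂'' : Ω → Ω₂ random variables such that the joint distributions of (V₁, V₂), (V₁, V₂'), and (V₁, V₂'') all coincide. Then for all measurable mappings Φ : Ω₁ × Ω₂ → ℝ and φ : Ω₁ → ℝ we have E[|Φ(V₁,V₂) − φ(V₁)|] ≥ (1/2) · E[|Φ(V₁,V₂') − Φ(V₁,V₂'')|]. -/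
open MeasureTheory ENNReal

theorem stmt0
    {Ω Ω₁ Ω₂ : Type*} [MeasurableSpace Ω] [MeasurableSpace Ω₁] [MeasurableSpace Ω₂]
    (P : Measure Ω) [IsProbabilityMeasure P]
    (V₁ : Ω → Ω₁) (V₂ V₂' V₂'' : Ω → Ω₂)
    (hV₁ : Measurable V₁) (hV₂ : Measurable V₂) (hV₂' : Measurable V₂') (hV₂'' : Measurable V₂'')
    (h1 : P.map (fun ω => (V₁ ω, V₂ ω)) = P.map (fun ω => (V₁ ω, V₂' ω)))
    (h2 : P.map (fun ω => (V₁ ω, V₂ ω)) = P.map (fun ω => (V₁ ω, V₂'' ω)))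
    (Φ : Ω₁ × Ω₂ → ℝ) (φ : Ω₁ → ℝ)
    (hΦ : Measurable Φ) (hφ : Measurable φ) :
    (1 / 2 : ℝ≥0∞) * ∫⁻ ω, ENNReal.ofReal |Φ (V₁ ω, V₂' ω) - Φ (V₁ ω, V₂'' ω)| ∂P
      ≤ ∫⁻ ω, ENNReal.ofReal |Φ (V₁ ω, V₂ ω) - φ (V₁ ω)| ∂P := by
  set g : Ω₁ × Ω₂ → ℝ≥0∞ := fun p => ENNReal.ofReal |Φ p - φ p.1| with hg
  have hgm : Measurable g := by
    apply Measurable.ennreal_ofReal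
    exact (hΦ.sub (hφ.comp measurable_fst)).abs
  have key : ∀ (W : Ω → Ω₂), Measurable W →
      P.map (fun ω => (V₁ ω, V₂ ω)) = P.map (fun ω => (V₁ ω, W ω)) →
      (∫⁻ ω, g (V₁ ω, W ω) ∂P) = ∫⁻ ω, g (V₁ ω, V₂ ω) ∂P := by
    intro W hW h
    rw [← lintegral_map hgm (hV₁.prodMk hW), ← h,
      lintegral_map hgm (hV₁.prodMk hV₂)]
  have h2' := key V₂'' hV₂'' h2
  have h1' := key V₂' hV₂' h1
  have tri : (∫⁻ ω, ENNReal.ofReal |Φ (V₁ ω, V₂' ω) - Φ (V₁ ω, V₂'' ω)| ∂P)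
      ≤ (∫⁻ ω, g (V₁ ω, V₂' ω) ∂P) + ∫⁻ ω, g (V₁ ω, V₂'' ω) ∂P := by
    rw [← lintegral_add_left (by fun_prop)]
    refine lintegral_mono fun ω => ?_
    simp only [hg]
    rw [← ENNReal.ofReal_add (abs_nonneg _) (abs_nonneg _)]
    exact ENNReal.ofReal_le_ofReal (by
      have := abs_sub_abs_le_abs_sub (Φ (V₁ ω, V₂' ω) - φ (V₁ ω))
      calc |Φ (V₁ ω, V₂' ω) - Φ (V₁ ω, V₂'' ω)|
          = |(Φ (V₁ ω, V₂' ω) - φ (V₁ ω)) - (Φ (V₁ ω, V₂'' ω) - φ (V₁ ω))| := by ring_nf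
        _ ≤ _ := abs_sub _ _)
  rw [h1', h2'] at tri
  calc (1 / 2 : ℝ≥0∞) * ∫⁻ ω, ENNReal.ofReal |Φ (V₁ ω, V₂' ω) - Φ (V₁ ω, V₂'' ω)| ∂P
      ≤ (1 / 2 : ℝ≥0∞) * ((∫⁻ ω, g (V₁ ω, V₂ ω) ∂P) + ∫⁻ ω, g (V₁ ω, V₂ ω) ∂P) :=
        mul_le_mul_right tri _
    _ = ∫⁻ ω, g (V₁ ω, V₂ ω) ∂P := by
        rw [← two_mul, ← mul_assoc, ENNReal.div_mul_cancel two_ne_zero ENNReal.ofNat_ne_top, one_mul]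
    _ = _ := rfl
end

section
/- Let τ ∈ [1, ∞) and let Y be a real random variable with distribution N(0, τ²). Then E[|sin(Y)|] ≥ (1/√(8π)) · exp(−π²/8). -/
open MeasureTheory ProbabilityTheory Real
open NNReal

lemma cos_gauss {v : ℝ≥0} (hv : 0 < (v:ℝ)) :
    ∫ x : ℝ, Real.cos (2 * x) * gaussianPDFReal 0 v x = Real.exp (-2 * v) := by
  set br : ℝ := (2 * (v:ℝ))⁻¹ with hbrdef
  have hbr : 0 < br := by positivity
  set b : ℂ := (br : ℂ) with hbdef
  have hb : 0 < b.re := by rwa [hbdef, Complex.ofReal_re]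
  have key := fourierIntegral_gaussian hb (2 : ℂ)
  have hfun : (fun x : ℝ ↦ Complex.exp (Complex.I * 2 * x) * Complex.exp (-b * x ^ 2))
      = fun x : ℝ ↦ Complex.exp (-b * x ^ 2 + Complex.I * 2 * x + 0) := by
    funext x; rw [← Complex.exp_add]; ring_nf
  have h1 : ∀ x : ℝ, (Complex.exp (Complex.I * 2 * x) * Complex.exp (-b * x ^ 2)).re
      = Real.cos (2 * x) * Real.exp (-br * x ^ 2) := by
    intro x
    rw [← Complex.exp_add, Complex.exp_re]
    have hre : (Complex.I * 2 * (x:ℂ) + -b * (x:ℂ) ^ 2).re = -br * x ^ 2 := by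
      simp [hbdef, ← Complex.ofReal_pow]
    have him : (Complex.I * 2 * (x:ℂ) + -b * (x:ℂ) ^ 2).im = 2 * x := by
      simp [hbdef, ← Complex.ofReal_pow]
    rw [hre, him]; ring
  have hint : Integrable (fun x : ℝ ↦ Complex.exp (Complex.I * 2 * x) * Complex.exp (-b * x ^ 2)) := by
    rw [hfun]; exact integrable_cexp_quadratic hb (Complex.I * 2) 0
  -- take real parts
  have hre_int : ∫ x : ℝ, Real.cos (2 * x) * Real.exp (-br * x ^ 2)
      = ((π / b : ℂ) ^ (1 / 2 : ℂ) * Complex.exp (-(2:ℂ) ^ 2 / (4 * b))).re := by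
    have h := integral_re hint
    simp only [RCLike.re_to_complex] at h
    rw [key] at h
    rw [← h]
    exact integral_congr_ae (Filter.Eventually.of_forall fun x ↦ (h1 x).symm)
  -- compute the RHS real part
  have hpb : (π / b : ℂ) = ((π / br : ℝ) : ℂ) := by push_cast [hbdef]; ring
  have hrhs : ((π / b : ℂ) ^ (1 / 2 : ℂ) * Complex.exp (-(2:ℂ) ^ 2 / (4 * b))).re
      = Real.sqrt (π / br) * Real.exp (-2 * v) := by
    have h2 : (-(2:ℂ) ^ 2 / (4 * b)) = ((-2 * (v:ℝ) : ℝ) : ℂ) := by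
      rw [hbdef, hbrdef]
      push_cast
      field_simp
      ring
    have h12 : ((1:ℂ)/2) = (((1:ℝ)/2 : ℝ) : ℂ) := by norm_num
    rw [h2, ← Complex.ofReal_exp, hpb, h12, ← Complex.ofReal_cpow (by positivity)]
    rw [← Complex.ofReal_mul, Complex.ofReal_re, Real.sqrt_eq_rpow]
  have hpdf : ∀ x : ℝ, Real.cos (2 * x) * gaussianPDFReal 0 v x
      = (Real.sqrt (2 * π * v))⁻¹ * (Real.cos (2 * x) * Real.exp (-br * x ^ 2)) := by
    intro x
    rw [gaussianPDFReal]
    have : -(x - 0) ^ 2 / (2 * (v:ℝ)) = -br * x ^ 2 := by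
      rw [hbrdef]; field_simp; ring
    rw [this]; ring
  calc ∫ x : ℝ, Real.cos (2 * x) * gaussianPDFReal 0 v x
      = ∫ x : ℝ, (Real.sqrt (2 * π * v))⁻¹ * (Real.cos (2 * x) * Real.exp (-br * x ^ 2)) :=
        integral_congr_ae (Filter.Eventually.of_forall hpdf)
    _ = (Real.sqrt (2 * π * v))⁻¹ * ∫ x : ℝ, Real.cos (2 * x) * Real.exp (-br * x ^ 2) :=
        MeasureTheory.integral_const_mul _ _
    _ = (Real.sqrt (2 * π * v))⁻¹ * (Real.sqrt (π / br) * Real.exp (-2 * v)) := by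
        rw [hre_int, hrhs]
    _ = Real.exp (-2 * v) := by
        have hs : Real.sqrt (π / br) = Real.sqrt (2 * π * v) := by
          congr 1
          rw [hbrdef]; field_simp
        rw [hs, ← mul_assoc, inv_mul_cancel₀ (by positivity), one_mul]

lemma integral_gauss_density {v : ℝ≥0} (hv : v ≠ 0) (f : ℝ → ℝ) :
    ∫ x, f x ∂(gaussianReal 0 v) = ∫ x, f x * gaussianPDFReal 0 v x := by
  rw [gaussianReal_of_var_ne_zero _ hv]
  have hmeas : Measurable fun x ↦ (gaussianPDFReal 0 v x).toNNReal :=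
    (measurable_gaussianPDFReal 0 v).real_toNNReal
  have : gaussianPDF 0 v = fun x ↦ (((gaussianPDFReal 0 v x).toNNReal : ℝ≥0) : ENNReal) := rfl
  rw [this, integral_withDensity_eq_integral_smul hmeas]
  refine integral_congr_ae (Filter.Eventually.of_forall fun x ↦ ?_)
  simp [NNReal.smul_def, Real.coe_toNNReal _ (gaussianPDFReal_nonneg 0 v x)]
  ring


theorem stmt1
    {Ω : Type*} [MeasurableSpace Ω] (P : Measure Ω) [IsProbabilityMeasure P]
    (τ : ℝ) (hτ : 1 ≤ τ) (Y : Ω → ℝ) (hY : Measurable Y)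
    (hlaw : P.map Y = gaussianReal 0 ⟨τ ^ 2, sq_nonneg τ⟩) :
    (1 / Real.sqrt (8 * π)) * Real.exp (-(π ^ 2) / 8) ≤ ∫ ω, |Real.sin (Y ω)| ∂P := by
  set v : ℝ≥0 := ⟨τ ^ 2, sq_nonneg τ⟩ with hvdef
  have hv1 : (1:ℝ) ≤ (v:ℝ) := by
    show (1:ℝ) ≤ τ ^ 2
    nlinarith
  have hvpos : 0 < (v:ℝ) := lt_of_lt_of_le one_pos hv1
  have hvne : v ≠ 0 := by
    intro h
    rw [h] at hvpos
    simp at hvpos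
  set μ : Measure ℝ := gaussianReal 0 v with hμdef
  have hmap : ∫ ω, |Real.sin (Y ω)| ∂P = ∫ x, |Real.sin x| ∂μ := by
    rw [← hlaw]
    exact (integral_map (f := fun x ↦ |Real.sin x|) hY.aemeasurable
      (Real.continuous_sin.abs.aestronglyMeasurable)).symm
  -- integrability over the probability measure μ
  have hμprob : IsProbabilityMeasure μ := by rw [hμdef]; infer_instance
  have hint_abs : Integrable (fun x ↦ |Real.sin x|) μ := by
    refine Integrable.mono' (integrable_const (1:ℝ))
      (Real.continuous_sin.abs.aestronglyMeasurable)
      (Filter.Eventually.of_forall fun x ↦ ?_)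
    rw [Real.norm_eq_abs, abs_abs]
    exact Real.abs_sin_le_one x
  have hint_sq : Integrable (fun x ↦ Real.sin x ^ 2) μ := by
    refine Integrable.mono' (integrable_const (1:ℝ))
      ((Real.continuous_sin.pow 2).aestronglyMeasurable)
      (Filter.Eventually.of_forall fun x ↦ ?_)
    rw [Real.norm_eq_abs, abs_of_nonneg (sq_nonneg _)]
    exact Real.sin_sq_le_one x
  have hint_cos : Integrable (fun x ↦ Real.cos (2 * x)) μ := by
    refine Integrable.mono' (integrable_const (1:ℝ))
      ((Real.continuous_cos.comp (continuous_const.mul continuous_id)).aestronglyMeasurable)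
      (Filter.Eventually.of_forall fun x ↦ ?_)
    rw [Real.norm_eq_abs]
    exact Real.abs_cos_le_one _
  -- pointwise: sin^2 ≤ |sin|
  have hmono : ∫ x, Real.sin x ^ 2 ∂μ ≤ ∫ x, |Real.sin x| ∂μ := by
    refine integral_mono hint_sq hint_abs fun x ↦ ?_
    calc Real.sin x ^ 2 = |Real.sin x| * |Real.sin x| := by
          rw [← abs_mul, abs_of_nonneg (by nlinarith [sq_nonneg (Real.sin x)] : (0:ℝ) ≤ Real.sin x * Real.sin x)]
          ring
      _ ≤ 1 * |Real.sin x| := by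
          apply mul_le_mul_of_nonneg_right (Real.abs_sin_le_one x) (abs_nonneg _)
      _ = |Real.sin x| := one_mul _
  -- compute ∫ sin^2
  have hsin_sq : ∀ x : ℝ, Real.sin x ^ 2 = 1/2 - Real.cos (2 * x) / 2 := by
    intro x
    have h1 := Real.sin_sq_add_cos_sq x
    have h2 := Real.cos_two_mul x
    nlinarith
  have hcos_int : ∫ x, Real.cos (2 * x) ∂μ = Real.exp (-2 * v) := by
    rw [hμdef, integral_gauss_density hvne]
    exact cos_gauss hvpos
  have hsq_int : ∫ x, Real.sin x ^ 2 ∂μ = 1/2 - Real.exp (-2 * v) / 2 := by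
    have : (fun x ↦ Real.sin x ^ 2) = fun x ↦ 1/2 - Real.cos (2 * x) / 2 := funext hsin_sq
    rw [this, integral_sub (integrable_const _) (hint_cos.div_const 2), integral_const,
      integral_div, hcos_int]
    simp
  -- numerics
  have hexp : Real.exp (-2 * v) ≤ Real.exp (-2) := by
    apply Real.exp_le_exp.mpr
    nlinarith
  have hexp2 : Real.exp (-2) ≤ 1/2 := by
    rw [Real.exp_neg]
    have : (2:ℝ) ≤ Real.exp 2 := by nlinarith [Real.add_one_le_exp (2:ℝ)]
    rw [inv_le_comm₀ (by linarith) (by norm_num)]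
    linarith
  have hlhs : (1 / Real.sqrt (8 * π)) * Real.exp (-(π ^ 2) / 8) ≤ 1/4 := by
    have h1 : Real.exp (-(π ^ 2) / 8) ≤ 1 := by
      rw [show (1:ℝ) = Real.exp 0 by simp]
      apply Real.exp_le_exp.mpr
      nlinarith [Real.pi_pos]
    have h2 : (4:ℝ) ≤ Real.sqrt (8 * π) := by
      rw [show (4:ℝ) = Real.sqrt 16 by
        rw [show (16:ℝ) = 4^2 by norm_num, Real.sqrt_sq]; norm_num]
      apply Real.sqrt_le_sqrt
      nlinarith [Real.pi_gt_three]
    have h3 : 1 / Real.sqrt (8 * π) ≤ 1/4 := by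
      rw [div_le_div_iff₀ (by positivity) (by norm_num)]
      linarith
    calc (1 / Real.sqrt (8 * π)) * Real.exp (-(π ^ 2) / 8)
        ≤ (1 / Real.sqrt (8 * π)) * 1 := by
          apply mul_le_mul_of_nonneg_left h1 (by positivity)
      _ = 1 / Real.sqrt (8 * π) := mul_one _
      _ ≤ 1/4 := h3
  rw [hmap]
  calc (1 / Real.sqrt (8 * π)) * Real.exp (-(π ^ 2) / 8) ≤ 1/4 := hlhs
    _ ≤ 1/2 - Real.exp (-2 * v) / 2 := by linarith
    _ = ∫ x, Real.sin x ^ 2 ∂μ := hsq_int.symm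
    _ ≤ ∫ x, |Real.sin x| ∂μ := hmono
end

section
/- There exist a non-decreasing function φ₁ : ℝ → [0, ∞) and a non-increasing function φ₂ : ℝ → [0, ∞) such that liminf_{ℕ ∋ n → ∞} [φ₁(n) · φ₂(n)] = ∞ while liminf_{ℝ ∋ x → ∞} [φ₁(x) · φ₂(x)] = 0 (in fact also liminf_{ℕ ∋ n → ∞} [φ₁(n) · φ₂(n+1)] = 0). -/
open Filter

theorem stmt5 :
    ∃ φ₁ φ₂ : ℝ → ℝ, Monotone φ₁ ∧ Antitone φ₂ ∧ (∀ x, 0 ≤ φ₁ x) ∧ (∀ x, 0 ≤ φ₂ x) ∧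
      Tendsto (fun n : ℕ => φ₁ n * φ₂ n) atTop atTop ∧
      liminf (fun x : ℝ => φ₁ x * φ₂ x) atTop = 0 ∧
      liminf (fun n : ℕ => φ₁ n * φ₂ (n + 1)) atTop = 0 := by
  have hfl : ∀ n : ℕ, ⌊(n : ℝ) + 2⁻¹⌋₊ = n := by
    intro n
    rw [Nat.floor_eq_iff (by positivity)]
    constructor
    · linarith
    · push_cast; linarith [show (0:ℝ) < 2⁻¹ by norm_num]
  refine ⟨fun x => Real.exp ((⌊x⌋₊ : ℝ) ^ 2),
    fun x => Real.exp (-(((⌊x + 2⁻¹⌋₊ : ℝ)) ^ 2 - ⌊x + 2⁻¹⌋₊)), ?_, ?_, ?_, ?_, ?_, ?_, ?_⟩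
  · intro x y hxy
    have h : (⌊x⌋₊ : ℝ) ≤ ⌊y⌋₊ := Nat.cast_le.mpr (Nat.floor_mono hxy)
    exact Real.exp_le_exp.mpr (pow_le_pow_left₀ (Nat.cast_nonneg _) h 2)
  · intro x y hxy
    have h : (⌊x + 2⁻¹⌋₊ : ℕ) ≤ ⌊y + 2⁻¹⌋₊ := Nat.floor_mono (by linarith)
    have h' : (⌊x + 2⁻¹⌋₊ : ℝ) ≤ ⌊y + 2⁻¹⌋₊ := Nat.cast_le.mpr h
    apply Real.exp_le_exp.mpr
    rcases eq_or_lt_of_le h with h0 | h0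
    · simp [h0]
    · have h1 : (⌊x + 2⁻¹⌋₊ : ℝ) + 1 ≤ ⌊y + 2⁻¹⌋₊ := by exact_mod_cast h0
      have h2 : (0 : ℝ) ≤ ⌊x + 2⁻¹⌋₊ := Nat.cast_nonneg _
      nlinarith
  · intro x; positivity
  · intro x; positivity
  · -- Tendsto
    have heq : ∀ n : ℕ, Real.exp ((⌊(n : ℝ)⌋₊ : ℝ) ^ 2) *
        Real.exp (-(((⌊(n : ℝ) + 2⁻¹⌋₊ : ℝ)) ^ 2 - ⌊(n : ℝ) + 2⁻¹⌋₊)) = Real.exp n := by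
      intro n
      rw [hfl n, Nat.floor_natCast, ← Real.exp_add]
      ring_nf
    simp only [heq]
    exact Real.tendsto_exp_atTop.comp tendsto_natCast_atTop_atTop
  · -- liminf over ℝ
    set f : ℝ → ℝ := fun x => Real.exp ((⌊x⌋₊ : ℝ) ^ 2) *
        Real.exp (-(((⌊x + 2⁻¹⌋₊ : ℝ)) ^ 2 - ⌊x + 2⁻¹⌋₊)) with hf
    have hval : ∀ n : ℕ, f ((n : ℝ) + 2⁻¹) = Real.exp (-(n : ℝ)) := by
      intro n
      have h1 : ⌊(n : ℝ) + 2⁻¹⌋₊ = n := hfl n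
      have h2 : ⌊(n : ℝ) + 2⁻¹ + 2⁻¹⌋₊ = n + 1 := by
        have : (n : ℝ) + 2⁻¹ + 2⁻¹ = (n + 1 : ℕ) := by push_cast; ring
        rw [this, Nat.floor_natCast]
      simp only [hf, h1, h2, ← Real.exp_add]
      push_cast
      ring_nf
    have hfreq : ∀ n : ℕ, ∃ᶠ x in atTop, f x ≤ Real.exp (-(n : ℝ)) := by
      intro n
      rw [frequently_atTop]
      intro a
      obtain ⟨m, hm1, hm2⟩ : ∃ m : ℕ, n ≤ m ∧ a ≤ (m : ℝ) :=
        ⟨max n ⌈a⌉₊, le_max_left _ _, le_trans (Nat.le_ceil a)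
          (Nat.cast_le.mpr (le_max_right _ _))⟩
      refine ⟨(m : ℝ) + 2⁻¹, by linarith, ?_⟩
      rw [hval m]
      apply Real.exp_le_exp.mpr
      simp only [neg_le_neg_iff]
      exact_mod_cast hm1
    have hbdd : IsBoundedUnder (· ≥ ·) atTop f :=
      ⟨0, by rw [eventually_map]
             exact Eventually.of_forall fun x => (by simp only [hf, ge_iff_le]; positivity)⟩
    have hcobdd : IsCoboundedUnder (· ≥ ·) atTop f :=
      IsCoboundedUnder.of_frequently_le ((hfreq 0).mono fun x hx => by simpa using hx)
    apply le_antisymm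
    · have h1 : ∀ n : ℕ, liminf f atTop ≤ Real.exp (-(n : ℝ)) := fun n =>
        liminf_le_of_frequently_le (hfreq n) hbdd
      have h2 : Tendsto (fun n : ℕ => Real.exp (-(n : ℝ))) atTop (nhds 0) := by
        apply Real.tendsto_exp_atBot.comp
        exact tendsto_neg_atBot_iff.mpr tendsto_natCast_atTop_atTop
      exact ge_of_tendsto' h2 h1
    · exact le_liminf_of_le hcobdd
        (Eventually.of_forall fun x => (by simp only [hf, ge_iff_le]; positivity))
  · -- liminf over ℕ shifted
    have heq : ∀ n : ℕ, Real.exp ((⌊(n : ℝ)⌋₊ : ℝ) ^ 2) *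
        Real.exp (-(((⌊(n : ℝ) + 1 + 2⁻¹⌋₊ : ℝ)) ^ 2 - ⌊(n : ℝ) + 1 + 2⁻¹⌋₊)) =
        Real.exp (-(n : ℝ)) := by
      intro n
      have h2 : ⌊(n : ℝ) + 1 + 2⁻¹⌋₊ = n + 1 := by
        have : (n : ℝ) + 1 + 2⁻¹ = ((n + 1 : ℕ) : ℝ) + 2⁻¹ := by push_cast; ring
        rw [this, hfl (n + 1)]
      rw [h2, Nat.floor_natCast, ← Real.exp_add]
      push_cast
      ring_nf
    have ht : Tendsto (fun n : ℕ => Real.exp (-(n : ℝ))) atTop (nhds 0) :=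
      Real.tendsto_exp_atBot.comp (tendsto_neg_atBot_iff.mpr tendsto_natCast_atTop_atTop)
    simp only [heq]
    exact ht.liminf_eq
end

section
/- Let ψ ∈ C¹(ℝ, ℝ) satisfy: for all q ∈ (0, ∞), liminf_{x → ∞} [ψ(x) · exp(−q x²)] = ∞, and assume ψ' is non-decreasing. Then for all q ∈ ℝ, liminf_{x → ∞} [ψ'(x) · exp(−q x²)] = ∞. -/
open Filter Real

theorem stmt6
    (ψ ψ' : ℝ → ℝ) (hderiv : ∀ x, HasDerivAt ψ (ψ' x) x) (hcont : Continuous ψ')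
    (hmono : Monotone ψ')
    (h : ∀ q : ℝ, 0 < q → Tendsto (fun x : ℝ => ψ x * Real.exp (-q * x ^ 2)) atTop atTop) :
    ∀ q : ℝ, Tendsto (fun x : ℝ => ψ' x * Real.exp (-q * x ^ 2)) atTop atTop := by
  intro q
  set Q : ℝ := max q 0 + 1 with hQdef
  have hQpos : 0 < Q := by
    have : (0:ℝ) ≤ max q 0 := le_max_right _ _
    simp only [hQdef]; linarith
  have hQq : q + 1 ≤ Q := by
    have : q ≤ max q 0 := le_max_left _ _
    simp only [hQdef]; linarith
  have hev : ∀ᶠ x in atTop, |ψ 0| + 1 ≤ ψ x * Real.exp (-Q * x ^ 2) :=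
    (h Q hQpos).eventually_ge_atTop _
  have hbound : ∀ᶠ x in atTop, Real.exp (x ^ 2) / x ≤ ψ' x * Real.exp (-q * x ^ 2) := by
    filter_upwards [hev, eventually_ge_atTop (1:ℝ)] with x hx hx1
    have hxpos : (0:ℝ) < x := by linarith
    have hQx : (0:ℝ) ≤ Q * x ^ 2 := by positivity
    have hone : (1:ℝ) ≤ Real.exp (Q * x ^ 2) := Real.one_le_exp hQx
    have h1 : (|ψ 0| + 1) * Real.exp (Q * x ^ 2) ≤ ψ x := by
      have := mul_le_mul_of_nonneg_right hx (Real.exp_pos (Q * x ^ 2)).le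
      rw [mul_assoc, ← Real.exp_add] at this
      simpa using this
    have h2 : Real.exp (Q * x ^ 2) + ψ 0 ≤ ψ x := by
      have habs : ψ 0 ≤ |ψ 0| := le_abs_self _
      nlinarith [abs_nonneg (ψ 0)]
    obtain ⟨c, hc, hceq⟩ := exists_hasDerivAt_eq_slope ψ ψ' hxpos
      (fun t _ => (hderiv t).continuousAt.continuousWithinAt)
      (fun t _ => hderiv t)
    have h3 : (ψ x - ψ 0) / x ≤ ψ' x := by
      have := hmono hc.2.le
      rw [hceq] at this
      simpa using this
    have h4 : Real.exp (Q * x ^ 2) / x ≤ ψ' x := by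
      refine le_trans ?_ h3
      gcongr
      linarith
    have h5 : Real.exp (Q * x ^ 2) / x * Real.exp (-q * x ^ 2)
        ≤ ψ' x * Real.exp (-q * x ^ 2) :=
      mul_le_mul_of_nonneg_right h4 (Real.exp_pos _).le
    refine le_trans ?_ h5
    rw [div_mul_eq_mul_div, ← Real.exp_add]
    gcongr
    nlinarith
  have hlim : Tendsto (fun x : ℝ => Real.exp (x ^ 2) / x) atTop atTop := by
    have base : Tendsto (fun x : ℝ => Real.exp x / x) atTop atTop := by
      simpa using Real.tendsto_exp_div_pow_atTop 1
    refine tendsto_atTop_mono' atTop ?_ base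
    filter_upwards [eventually_ge_atTop (1:ℝ)] with x hx1
    have hxpos : (0:ℝ) < x := by linarith
    gcongr
    nlinarith
  exact tendsto_atTop_mono' atTop hbound hlim
end

section
/- Let η₁, η₂, η₃ ∈ (0, ∞) and let ψ : ℝ → (0, ∞) be strictly increasing and continuous with liminf_{x→∞} ψ(x) = ∞. Then the following are equivalent: (i) for all q ∈ (0, ∞), liminf_{ℕ ∋ n → ∞} [n^q · exp(−η₁ |ψ⁻¹(η₂ n^{η₃})|²)] = ∞; (ii) for all q ∈ (0, ∞), liminf_{ℝ ∋ x → ∞} [ψ(x) · exp(−q x²)] = ∞. -/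
open Filter Real

theorem stmt8
    (η₁ η₂ η₃ : ℝ) (hη₁ : 0 < η₁) (hη₂ : 0 < η₂) (hη₃ : 0 < η₃)
    (ψ : ℝ → ℝ) (hpos : ∀ x, 0 < ψ x) (hmono : StrictMono ψ) (hcont : Continuous ψ)
    (htop : Tendsto ψ atTop atTop) :
    (∀ q : ℝ, 0 < q →
        Tendsto
          (fun n : ℕ =>
            (n : ℝ) ^ q *
              Real.exp (-η₁ * (Function.invFun ψ (η₂ * (n : ℝ) ^ η₃)) ^ 2))
          atTop atTop) ↔
      (∀ q : ℝ, 0 < q →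
        Tendsto (fun x : ℝ => ψ x * Real.exp (-q * x ^ 2)) atTop atTop) := by
  have hrange : ∀ y, ψ 0 ≤ y → ∃ x, ψ x = y := by
    intro y hy
    obtain ⟨b, hb0, hby⟩ :=
      ((eventually_ge_atTop (0:ℝ)).and (htop.eventually_ge_atTop y)).exists
    obtain ⟨x, -, hx⟩ := intermediate_value_Icc hb0 hcont.continuousOn ⟨hy, hby⟩
    exact ⟨x, hx⟩
  have hinv : ∀ y, ψ 0 ≤ y → ψ (Function.invFun ψ y) = y := fun y hy =>
    Function.invFun_eq (hrange y hy)
  have hinv_ge : ∀ M y, ψ 0 ≤ y → ψ M ≤ y → M ≤ Function.invFun ψ y := by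
    intro M y hy hMy
    exact hmono.le_iff_le.mp (by rw [hinv y hy]; exact hMy)
  have hinv_top : Tendsto (Function.invFun ψ) atTop atTop := by
    refine tendsto_atTop.2 fun M => ?_
    filter_upwards [eventually_ge_atTop (ψ 0), eventually_ge_atTop (ψ M)] with y h0 hM
    exact hinv_ge M y h0 hM
  have hy_top : Tendsto (fun n : ℕ => η₂ * (n : ℝ) ^ η₃) atTop atTop :=
    ((tendsto_rpow_atTop hη₃).comp tendsto_natCast_atTop_atTop).const_mul_atTop hη₂
  have hx_top : Tendsto (fun n : ℕ => Function.invFun ψ (η₂ * (n : ℝ) ^ η₃)) atTop atTop :=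
    hinv_top.comp hy_top
  set X : ℕ → ℝ := fun n => Function.invFun ψ (η₂ * (n : ℝ) ^ η₃) with hXdef
  constructor
  · -- (i) → (ii)
    intro h1 q hq
    set q' := η₁ * η₃ / q with hq'def
    have hq' : 0 < q' := by positivity
    set c := q / η₁ with hcdef
    have hc : 0 < c := by positivity
    have hq'c : q' * c = η₃ := by rw [hq'def, hcdef]; field_simp
    have hηc : η₁ * c = q := by rw [hcdef]; field_simp
    set t : ℝ → ℝ := fun x => (ψ x / η₂) ^ η₃⁻¹ with htdef
    have ht_top : Tendsto t atTop atTop :=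
      (tendsto_rpow_atTop (by positivity)).comp (htop.atTop_div_const hη₂)
    set m : ℝ → ℕ := fun x => ⌊t x⌋₊ + 1 with hmdef
    have hm_top : Tendsto m atTop atTop :=
      (tendsto_add_atTop_nat 1).comp (tendsto_nat_floor_atTop.comp ht_top)
    set B : ℕ → ℝ := fun n =>
      (n : ℝ) ^ q' * Real.exp (-η₁ * (X n) ^ 2) with hBdef
    have hBtop : Tendsto B atTop atTop := h1 q' hq'
    have hg : Tendsto (fun x => (η₂ * 2 ^ (-η₃)) * (B (m x)) ^ c) atTop atTop :=
      ((tendsto_rpow_atTop hc).comp (hBtop.comp hm_top)).const_mul_atTop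
        (by positivity)
    refine tendsto_atTop_mono' atTop ?_ hg
    filter_upwards [eventually_ge_atTop (0:ℝ), ht_top.eventually_ge_atTop 1]
      with x hx0 ht1
    have hψx : 0 < ψ x := hpos x
    have htx0 : (0:ℝ) ≤ t x := le_trans zero_le_one ht1
    have hn1 : 1 ≤ ⌊t x⌋₊ := Nat.le_floor (by exact_mod_cast ht1)
    have hnle : ((⌊t x⌋₊ : ℝ)) ≤ t x := Nat.floor_le htx0
    have hmx : t x ≤ (m x : ℝ) := by
      have := (Nat.lt_floor_add_one (t x)).le
      simpa [hmdef] using this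
    have hteq : (t x) ^ η₃ = ψ x / η₂ :=
      Real.rpow_inv_rpow (by positivity) hη₃.ne'
    have ha : η₂ * ((⌊t x⌋₊ : ℝ)) ^ η₃ ≤ ψ x := by
      have h := Real.rpow_le_rpow (Nat.cast_nonneg _) hnle hη₃.le
      rw [hteq] at h
      calc η₂ * ((⌊t x⌋₊ : ℝ)) ^ η₃ ≤ η₂ * (ψ x / η₂) :=
            mul_le_mul_of_nonneg_left h hη₂.le
        _ = ψ x := by field_simp
    have hc1 : ψ x ≤ η₂ * ((m x : ℝ)) ^ η₃ := by
      have h := Real.rpow_le_rpow htx0 hmx hη₃.le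
      rw [hteq] at h
      calc ψ x = η₂ * (ψ x / η₂) := by field_simp
        _ ≤ η₂ * ((m x : ℝ)) ^ η₃ := mul_le_mul_of_nonneg_left h hη₂.le
    have hrangeY : ψ 0 ≤ η₂ * ((m x : ℝ)) ^ η₃ :=
      le_trans (hmono.monotone hx0) hc1
    have hxX : x ≤ X (m x) := hinv_ge x _ hrangeY hc1
    have hE : Real.exp (-q * (X (m x)) ^ 2) ≤ Real.exp (-q * x ^ 2) := by
      have hsq : x ^ 2 ≤ (X (m x)) ^ 2 := by nlinarith
      exact Real.exp_le_exp.2 (by nlinarith)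
    have hb2 : (2:ℝ) ^ (-η₃) * ((m x : ℝ)) ^ η₃ ≤ ((⌊t x⌋₊ : ℝ)) ^ η₃ := by
      have hm2 : ((m x : ℝ)) ≤ 2 * ((⌊t x⌋₊ : ℝ)) := by
        have : (1:ℝ) ≤ ((⌊t x⌋₊ : ℝ)) := by exact_mod_cast hn1
        simp only [hmdef]
        push_cast
        linarith
      have h := Real.rpow_le_rpow (Nat.cast_nonneg _) hm2 hη₃.le
      rw [Real.mul_rpow (by norm_num) (Nat.cast_nonneg _)] at h
      rw [Real.rpow_neg (by norm_num)]
      rw [inv_mul_le_iff₀ (by positivity)]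
      exact h
    have hBval : (B (m x)) ^ c =
        ((m x : ℝ)) ^ η₃ * Real.exp (-q * (X (m x)) ^ 2) := by
      rw [hBdef]
      rw [Real.mul_rpow (by positivity) (Real.exp_pos _).le,
        ← Real.rpow_mul (Nat.cast_nonneg _), hq'c, ← Real.exp_mul]
      congr 1
      congr 1
      linear_combination (-(X (m x)) ^ 2) * hηc
    rw [hBval]
    calc (η₂ * 2 ^ (-η₃)) * (((m x : ℝ)) ^ η₃ * Real.exp (-q * (X (m x)) ^ 2))
        = η₂ * (((2:ℝ) ^ (-η₃) * ((m x : ℝ)) ^ η₃) * Real.exp (-q * (X (m x)) ^ 2)) := by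
          ring
      _ ≤ η₂ * (((⌊t x⌋₊ : ℝ)) ^ η₃ * Real.exp (-q * (X (m x)) ^ 2)) := by
          apply mul_le_mul_of_nonneg_left _ hη₂.le
          exact mul_le_mul_of_nonneg_right hb2 (Real.exp_pos _).le
      _ = (η₂ * ((⌊t x⌋₊ : ℝ)) ^ η₃) * Real.exp (-q * (X (m x)) ^ 2) := by ring
      _ ≤ ψ x * Real.exp (-q * (X (m x)) ^ 2) :=
          mul_le_mul_of_nonneg_right ha (Real.exp_pos _).le
      _ ≤ ψ x * Real.exp (-q * x ^ 2) :=
          mul_le_mul_of_nonneg_left hE (hpos x).le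
  · -- (ii) → (i)
    intro h2 q hq
    set p := η₁ * η₃ / q with hpdef
    have hp : 0 < p := by positivity
    set c := q / η₃ with hcdef
    have hc : 0 < c := by positivity
    have hpc : p * c = η₁ := by rw [hpdef, hcdef]; field_simp
    have hηc : η₃ * c = q := by rw [hcdef]; field_simp
    have key : Tendsto
        (fun n : ℕ => η₂ ^ (-c) * (ψ (X n) * Real.exp (-p * (X n) ^ 2)) ^ c)
        atTop atTop :=
      Tendsto.const_mul_atTop (Real.rpow_pos_of_pos hη₂ _)
        ((tendsto_rpow_atTop hc).comp ((h2 p hp).comp hx_top))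
    refine key.congr' ?_
    filter_upwards [hy_top.eventually_ge_atTop (ψ 0)] with n h0
    have hX : ψ (X n) = η₂ * (n : ℝ) ^ η₃ := hinv _ h0
    rw [hX]
    rw [Real.mul_rpow (by positivity) (Real.exp_pos _).le,
      Real.mul_rpow hη₂.le (by positivity),
      ← Real.rpow_mul (Nat.cast_nonneg _), hηc, ← Real.exp_mul]
    have hexp : -p * (X n) ^ 2 * c = -η₁ * (X n) ^ 2 := by
      linear_combination (-(X n) ^ 2) * hpc
    rw [hexp]
    have h1 : η₂ ^ (-c) * η₂ ^ c = 1 := by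
      rw [← Real.rpow_add hη₂]; simp
    linear_combination ((n : ℝ) ^ q * Real.exp (-η₁ * (X n) ^ 2)) * h1
end
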